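/- Let n ≥ 2, κ ∈ {0, −1}, and φ : [0,∞) → ℝ be C² with φ' ≤ 0. Let T be the solution of T'' + ((n−1)C_κ/S_κ − φ')T' − (n−1)S_κ^{−2}T = 0, T(0) = 0, T'(0) = 1, with T > 0 and T' > 0 on (0,∞). Define H(t) = (T'(t))² + (n−1)T²(t)/S_κ²(t). Then H'(t) = −(2(n−1)/S_κ³(t))·[C_κ(t)S_κ²(t)(T'(t))² − 2S_κ(t)T(t)T'(t) + C_κ(t)T²(t)] + 2(T'(t))²φ'(t) ≤ 0 for all t > 0, so H is non-increasing on (0,∞). -/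

import Mathlib

open Set

theorem H_antitone (n : ℕ) (hn : 2 ≤ n) (κ : ℝ) (S : ℝ → ℝ)
    (hS : (κ = 0 ∧ S = fun t => t) ∨ (κ = -1 ∧ S = Real.sinh))
    (φ : ℝ → ℝ) (hφ : ContDiffOn ℝ 2 φ (Ici 0))
    (hφ' : ∀ t ≥ (0 : ℝ), deriv φ t ≤ 0)
    (T : ℝ → ℝ) (hT : ContDiffOn ℝ 2 T (Ici 0))
    (hODE : ∀ t ∈ Ioi (0 : ℝ),
      deriv (deriv T) t + (((n : ℝ) - 1) * deriv S t / S t - deriv φ t) * deriv T t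
        - ((n : ℝ) - 1) / (S t) ^ 2 * T t = 0)
    (hT0 : T 0 = 0) (hT0' : deriv T 0 = 1)
    (hTpos : ∀ t ∈ Ioi (0 : ℝ), 0 < T t) (hT'pos : ∀ t ∈ Ioi (0 : ℝ), 0 < deriv T t)
    (H : ℝ → ℝ)
    (hH : ∀ t, H t = (deriv T t) ^ 2 + ((n : ℝ) - 1) * (T t) ^ 2 / (S t) ^ 2) :
    (∀ t ∈ Ioi (0 : ℝ),
      deriv H t = -(2 * ((n : ℝ) - 1) / (S t) ^ 3)
            * (deriv S t * (S t) ^ 2 * (deriv T t) ^ 2 - 2 * S t * T t * deriv T t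
               + deriv S t * (T t) ^ 2)
          + 2 * (deriv T t) ^ 2 * deriv φ t
        ∧ deriv H t ≤ 0) ∧ AntitoneOn H (Ioi 0) := by
  have hHfun : H = fun t => (deriv T t) ^ 2 + ((n : ℝ) - 1) * (T t) ^ 2 / (S t) ^ 2 :=
    funext hH
  set c : ℝ := (n : ℝ) - 1 with hc
  have hcpos : 0 < c := by
    have : (2 : ℝ) ≤ (n : ℝ) := by exact_mod_cast hn
    simp only [hc]; linarith
  -- facts about S
  have hSsmooth : ContDiff ℝ 2 S := by
    rcases hS with ⟨_, rfl⟩ | ⟨_, rfl⟩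
    · exact contDiff_id
    · exact Real.contDiff_sinh
  have hSpos : ∀ t ∈ Ioi (0 : ℝ), 0 < S t := by
    rcases hS with ⟨_, rfl⟩ | ⟨_, rfl⟩
    · intro t ht; exact ht
    · intro t ht; exact Real.sinh_pos_iff.2 ht
  have hS'ge : ∀ t : ℝ, 1 ≤ deriv S t := by
    rcases hS with ⟨_, rfl⟩ | ⟨_, rfl⟩
    · intro t; simp
    · intro t; rw [Real.deriv_sinh]; exact Real.one_le_cosh t
  -- differentiability of T and deriv T on Ioi 0
  have hTopen : ContDiffOn ℝ 2 T (Ioi 0) := hT.mono Ioi_subset_Ici_self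
  have hT'cd : ContDiffOn ℝ 1 (deriv T) (Ioi 0) :=
    hTopen.deriv_of_isOpen isOpen_Ioi (by norm_num)
  have hTdiff : ∀ t ∈ Ioi (0 : ℝ), DifferentiableAt ℝ T t := fun t ht =>
    ((hTopen t ht).contDiffAt (isOpen_Ioi.mem_nhds ht)).differentiableAt (by norm_num)
  have hT'diff : ∀ t ∈ Ioi (0 : ℝ), DifferentiableAt ℝ (deriv T) t := fun t ht =>
    ((hT'cd t ht).contDiffAt (isOpen_Ioi.mem_nhds ht)).differentiableAt (by norm_num)
  -- H has the claimed derivative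
  have key : ∀ t ∈ Ioi (0 : ℝ),
      HasDerivAt H
        (-(2 * c / (S t) ^ 3)
            * (deriv S t * (S t) ^ 2 * (deriv T t) ^ 2 - 2 * S t * T t * deriv T t
               + deriv S t * (T t) ^ 2)
          + 2 * (deriv T t) ^ 2 * deriv φ t) t := by
    intro t ht
    have hst : 0 < S t := hSpos t ht
    have hsne : S t ≠ 0 := ne_of_gt hst
    have hS1 : HasDerivAt S (deriv S t) t :=
      (hSsmooth.differentiable (by norm_num)).differentiableAt.hasDerivAt
    have h1 : HasDerivAt T (deriv T t) t := (hTdiff t ht).hasDerivAt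
    have h2 : HasDerivAt (deriv T) (deriv (deriv T) t) t := (hT'diff t ht).hasDerivAt
    have hA : HasDerivAt (fun u => (deriv T u) ^ 2)
        (2 * deriv T t * deriv (deriv T) t) t := by
      have := h2.fun_pow 2
      simpa [mul_comm, mul_assoc, mul_left_comm] using this
    have hB : HasDerivAt (fun u => c * (T u) ^ 2 / (S u) ^ 2)
        ((c * (2 * T t * deriv T t) * (S t) ^ 2
          - c * (T t) ^ 2 * (2 * S t * deriv S t)) / ((S t) ^ 2) ^ 2) t := by
      have hnum : HasDerivAt (fun u => c * (T u) ^ 2) (c * (2 * T t * deriv T t)) t := by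
        have := (h1.pow 2).const_mul c
        simpa [mul_comm, mul_assoc, mul_left_comm] using this
      have hden : HasDerivAt (fun u => (S u) ^ 2) (2 * S t * deriv S t) t := by
        have := hS1.fun_pow 2
        simpa [mul_comm, mul_assoc, mul_left_comm] using this
      exact hnum.div hden (pow_ne_zero 2 hsne)
    have hsum := hA.fun_add hB
    rw [hHfun]
    convert hsum using 1
    · rfl
    · rfl
    have hODEt := hODE t ht
    have hd : deriv (deriv T) t
        = c / (S t) ^ 2 * T t - (c * deriv S t / S t - deriv φ t) * deriv T t := by
      rw [hc]; linarith [hODEt]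
    rw [hd]
    field_simp
    ring
  constructor
  · intro t ht
    have hderiv := (key t ht).deriv
    refine ⟨hderiv, ?_⟩
    rw [hderiv]
    have hst : 0 < S t := hSpos t ht
    have hbr : 0 ≤ deriv S t * (S t) ^ 2 * (deriv T t) ^ 2 - 2 * S t * T t * deriv T t
        + deriv S t * (T t) ^ 2 := by
      have h1 := hS'ge t
      nlinarith [sq_nonneg (S t * deriv T t - T t), sq_nonneg (S t * deriv T t), sq_nonneg (T t)]
    have hφt : deriv φ t ≤ 0 := hφ' t (le_of_lt ht)
    have h1 : -(2 * c / (S t) ^ 3) ≤ 0 := by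
      have : 0 < 2 * c / (S t) ^ 3 := by positivity
      linarith
    have ht1 : -(2 * c / (S t) ^ 3)
        * (deriv S t * (S t) ^ 2 * (deriv T t) ^ 2 - 2 * S t * T t * deriv T t
           + deriv S t * (T t) ^ 2) ≤ 0 := mul_nonpos_of_nonpos_of_nonneg h1 hbr
    have ht2 : 2 * (deriv T t) ^ 2 * deriv φ t ≤ 0 := by
      have : (0:ℝ) ≤ 2 * (deriv T t) ^ 2 := by positivity
      exact mul_nonpos_of_nonneg_of_nonpos this hφt
    linarith
  · apply antitoneOn_of_deriv_nonpos (convex_Ioi 0)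
    · intro t ht
      exact ((key t ht).differentiableAt).continuousAt.continuousWithinAt
    · intro t ht
      rw [interior_Ioi] at ht
      exact ((key t ht).differentiableAt).differentiableWithinAt
    · intro t ht
      rw [interior_Ioi] at ht
      have := (key t ht).deriv
      rw [this]
      have hst : 0 < S t := hSpos t ht
      have hbr : 0 ≤ deriv S t * (S t) ^ 2 * (deriv T t) ^ 2 - 2 * S t * T t * deriv T t
          + deriv S t * (T t) ^ 2 := by
        have h1 := hS'ge t
        nlinarith [sq_nonneg (S t * deriv T t - T t), sq_nonneg (S t * deriv T t), sq_nonneg (T t)]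
      have hφt : deriv φ t ≤ 0 := hφ' t (le_of_lt ht)
      have h1 : -(2 * c / (S t) ^ 3) ≤ 0 := by
        have : 0 < 2 * c / (S t) ^ 3 := by positivity
        linarith
      have ht1 := mul_nonpos_of_nonpos_of_nonneg h1 hbr
      have ht2 : 2 * (deriv T t) ^ 2 * deriv φ t ≤ 0 := by
        have : (0:ℝ) ≤ 2 * (deriv T t) ^ 2 := by positivity
        exact mul_nonpos_of_nonneg_of_nonpos this hφt
      linarith
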